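/- Let c ∈ ℂ and K > 0, and let (u_m)_{m≥1} be a sequence of complex numbers with |u_m - c/(4m)| ≤ K/m² for all m ≥ 1. Then there exist C > 0 and m₀ ∈ ℕ such that for all m ≥ m₀: every factor 1 + u_m/(4k) (1 ≤ k ≤ m) is nonzero and |∏_{k=1}^{m} (1 + u_m/(4k))^{-2} - [1 - c·log m/(8m) - g·c/(8m)]| ≤ C·(log m)²/m², where g is the Euler–Mascheroni constant. -/

import Mathlib

set_option maxHeartbeats 2000000
open Finset

lemma auxH1 (m : ℕ) : (harmonic m : ℝ) ≤ Real.log m + 1 := by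
  have := harmonic_le_one_add_log m; linarith

lemma auxH0 (m : ℕ) : (0:ℝ) ≤ (harmonic m : ℝ) := by
  rcases Nat.eq_zero_or_pos m with h | h
  · simp [h]
  · exact_mod_cast (harmonic_pos (by omega)).le

lemma auxH2 (m : ℕ) (hm : 1 ≤ m) :
    |(harmonic m : ℝ) - Real.log m - Real.eulerMascheroniConstant| ≤ 1 / m := by
  have h1 : Real.eulerMascheroniConstant < (harmonic m : ℝ) - Real.log m := by
    have := Real.eulerMascheroniConstant_lt_eulerMascheroniSeq' m
    rw [Real.eulerMascheroniSeq', if_neg (by omega : ¬ m = 0)] at this; exact this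
  have h2 : (harmonic m : ℝ) - Real.log (m+1) < Real.eulerMascheroniConstant := by
    have := Real.eulerMascheroniSeq_lt_eulerMascheroniConstant m
    simpa [Real.eulerMascheroniSeq] using this
  have hmpos : (0:ℝ) < m := by exact_mod_cast hm
  have hlog : Real.log (m+1) - Real.log m ≤ 1 / m := by
    rw [← Real.log_div (by positivity) (by positivity)]
    have h : ((m:ℝ)+1)/m = 1 + 1/m := by field_simp
    rw [h]
    have := Real.log_le_sub_one_of_pos (x := 1 + 1/(m:ℝ)) (by positivity)
    linarith
  rw [abs_le]
  constructor <;> nlinarith [h1, h2, hlog]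

lemma auxSq (m : ℕ) (hm : 1 ≤ m) :
    ∑ k ∈ Finset.Icc 1 m, ((k:ℝ)^2)⁻¹ ≤ 2 := by
  rw [Finset.Icc_eq_cons_Ioc hm, Finset.sum_cons]
  have := sum_Ioc_inv_sq_le_sub (α := ℝ) (k := 1) (n := m) one_ne_zero hm
  have hm' : (0:ℝ) ≤ ((m:ℝ))⁻¹ := by positivity
  norm_num at this ⊢
  linarith

lemma auxLog (z : ℂ) (hz : ‖z‖ ≤ 1/2) : ‖Complex.log (1 + z) - z‖ ≤ ‖z‖^2 := by
  have h1 : ‖z‖ < 1 := by linarith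
  have := Complex.norm_log_one_add_sub_self_le h1
  have h2 : (1 - ‖z‖)⁻¹ ≤ 2 := by
    rw [inv_le_comm₀ (by linarith) (by norm_num)]; linarith
  nlinarith [sq_nonneg ‖z‖, norm_nonneg z]

/-- Let `c ∈ ℂ`, `K > 0`, and let `(u_m)_{m ≥ 1}` satisfy `|u_m - c/(4m)| ≤ K/m²` for all
`m ≥ 1`. Then there are `C > 0` and `m₀` such that for all `m ≥ m₀` every factor
`1 + u_m/(4k)` (`1 ≤ k ≤ m`) is nonzero and
`|∏_{k=1}^m (1 + u_m/(4k))^{-2} - [1 - c log m/(8m) - g c/(8m)]| ≤ C (log m)²/m²`,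
where `g` is the Euler–Mascheroni constant. -/
theorem stmt19 (c : ℂ) (K : ℝ) (hK : 0 < K) (u : ℕ → ℂ)
    (hu : ∀ m : ℕ, 1 ≤ m → ‖u m - c / (4 * (m : ℂ))‖ ≤ K / (m : ℝ) ^ 2) :
    ∃ C > (0 : ℝ), ∃ m₀ : ℕ, ∀ m : ℕ, m₀ ≤ m →
      (∀ k ∈ Finset.Icc 1 m, (1 : ℂ) + u m / (4 * (k : ℂ)) ≠ 0) ∧
      ‖(∏ k ∈ Finset.Icc 1 m, ((1 : ℂ) + u m / (4 * (k : ℂ)))⁻¹ ^ 2) -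
          (1 - c * (Real.log m : ℂ) / (8 * (m : ℂ))
             - (Real.eulerMascheroniConstant : ℂ) * c / (8 * (m : ℂ)))‖
        ≤ C * (Real.log m) ^ 2 / (m : ℝ) ^ 2 := by
  set g := Real.eulerMascheroniConstant with hg
  set A : ℝ := ‖c‖/4 + K with hA
  set B : ℝ := A + A^2/4 with hB
  have hA0 : 0 < A := by positivity
  have hB0 : 0 < B := by positivity
  clear_value B
  clear_value A
  -- eventual conditions
  have hev : ∀ᶠ m : ℕ in Filter.atTop,
      3 ≤ m ∧ A ≤ 2 * (m:ℝ) ∧ B * Real.log m / m ≤ 1 := by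
    have e1 : ∀ᶠ m : ℕ in Filter.atTop, 3 ≤ m := Filter.eventually_ge_atTop 3
    have e2 : ∀ᶠ m : ℕ in Filter.atTop, A ≤ 2 * (m:ℝ) := by
      have : Filter.Tendsto (fun m : ℕ => 2 * (m:ℝ)) Filter.atTop Filter.atTop :=
        (tendsto_natCast_atTop_atTop (R := ℝ)).const_mul_atTop (by norm_num)
      exact this.eventually_ge_atTop A
    have e3 : ∀ᶠ m : ℕ in Filter.atTop, B * Real.log m / m ≤ 1 := by
      have h0 : Filter.Tendsto (fun x : ℝ => Real.log x / x) Filter.atTop (nhds 0) :=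
        Real.isLittleO_log_id_atTop.tendsto_div_nhds_zero
      have h1 : Filter.Tendsto (fun m : ℕ => B * (Real.log m / m)) Filter.atTop (nhds (B * 0)) :=
        ((h0.comp (tendsto_natCast_atTop_atTop (R := ℝ))).const_mul B)
      rw [mul_zero] at h1
      filter_upwards [h1.eventually_le_const (by norm_num : (0:ℝ) < 1)] with m hm
      rw [mul_div_assoc]; exact hm
    filter_upwards [e1, e2, e3] with m h1 h2 h3; exact ⟨h1, h2, h3⟩
  obtain ⟨m₀, hm₀⟩ := Filter.eventually_atTop.mp hev
  refine ⟨B^2 + A^2/4 + ‖c‖/8 + K + 1, by positivity, m₀, fun m hm => ?_⟩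
  obtain ⟨h3m, hA2m, hBlog⟩ := hm₀ m hm
  have hm1 : 1 ≤ m := by omega
  have hn0 : (0:ℝ) < m := by exact_mod_cast (by omega : 0 < m)
  have hn1 : (1:ℝ) ≤ m := by exact_mod_cast hm1
  set L : ℝ := Real.log m with hLdef
  clear_value L
  have hL1 : 1 ≤ L := by
    rw [hLdef, Real.le_log_iff_exp_le hn0]
    calc Real.exp 1 ≤ 2.7182818286 := Real.exp_one_lt_d9.le
      _ ≤ 3 := by norm_num
      _ ≤ m := by exact_mod_cast h3m
  -- norm of u m
  set a : ℂ := u m with ha'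
  clear_value a
  have haN : ‖a‖ ≤ A / m := by
    have h1 := hu m hm1
    rw [← ha'] at h1
    have h2 : ‖c / (4 * (m:ℂ))‖ = ‖c‖ / (4 * m) := by
      rw [norm_div, norm_mul]
      norm_num [Complex.norm_natCast]
    calc ‖a‖ = ‖(a - c/(4*(m:ℂ))) + c/(4*(m:ℂ))‖ := by ring_nf
      _ ≤ ‖a - c/(4*(m:ℂ))‖ + ‖c/(4*(m:ℂ))‖ := norm_add_le _ _
      _ ≤ K / (m:ℝ)^2 + ‖c‖/(4*m) := by rw [h2]; exact add_le_add_left h1 _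
      _ ≤ K / m + ‖c‖/(4*m) := by
          gcongr
          · rw [pow_two]; nlinarith
      _ = A / m := by rw [hA]; field_simp; ring
  -- factors
  have hwnorm : ∀ k ∈ Finset.Icc 1 m, ‖a / (4*(k:ℂ))‖ ≤ 1/2 ∧
      ‖a / (4*(k:ℂ))‖^2 ≤ ‖a‖^2/16 * ((k:ℝ)^2)⁻¹ := by
    intro k hk
    obtain ⟨hk1, hkm⟩ := Finset.mem_Icc.mp hk
    have hk0 : (0:ℝ) < k := by exact_mod_cast hk1
    have hnk : ‖a / (4*(k:ℂ))‖ = ‖a‖ / (4*k) := by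
      rw [norm_div, norm_mul]; norm_num [Complex.norm_natCast]
    constructor
    · rw [hnk]
      have hk1' : (1:ℝ) ≤ k := by exact_mod_cast hk1
      have hle : ‖a‖ / (4*(k:ℝ)) ≤ ‖a‖ / 4 := by
        gcongr
        · linarith
      have : ‖a‖ / 4 ≤ A / (4*m) := by
        rw [div_le_div_iff₀ (by norm_num) (by positivity)]
        calc ‖a‖ * (4*(m:ℝ)) = 4 * m * ‖a‖ := by ring
          _ ≤ 4 * m * (A/m) := mul_le_mul_of_nonneg_left haN (by positivity)
          _ = A * 4 := by field_simp
      have h12 : A / (4*(m:ℝ)) ≤ 1/2 := by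
        rw [div_le_div_iff₀ (by positivity) (by norm_num)]; linarith
      linarith
    · have hk0' : (k:ℝ) ≠ 0 := ne_of_gt hk0
      refine le_of_eq ?_
      rw [hnk, div_pow]
      field_simp
      ring
  have hne : ∀ k ∈ Finset.Icc 1 m, (1:ℂ) + a / (4*(k:ℂ)) ≠ 0 := by
    intro k hk h0
    have h1 : ‖a / (4*(k:ℂ))‖ = 1 := by
      have : a / (4*(k:ℂ)) = -1 := by linear_combination h0
      rw [this]; simp
    have := (hwnorm k hk).1
    rw [h1] at this; norm_num at this
  refine ⟨hne, ?_⟩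
  -- harmonic number
  set Hr : ℝ := (harmonic m : ℝ) with hHr
  clear_value Hr
  have hHsum : (∑ k ∈ Finset.Icc 1 m, ((k:ℂ))⁻¹) = ((Hr:ℝ):ℂ) := by
    rw [hHr]
    push_cast [harmonic_eq_sum_Icc]
    rfl
  set S : ℂ := ∑ k ∈ Finset.Icc 1 m, Complex.log (1 + a/(4*(k:ℂ))) with hS
  clear_value S
  have hprod : (∏ k ∈ Finset.Icc 1 m, ((1:ℂ) + a/(4*(k:ℂ)))⁻¹ ^ 2)
      = Complex.exp ((-2) * S) := by
    rw [hS, Finset.mul_sum, Complex.exp_sum]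
    refine Finset.prod_congr rfl fun k hk => ?_
    rw [show (-2:ℂ) * Complex.log (1 + a/(4*(k:ℂ)))
          = ((2:ℕ):ℂ) * (-Complex.log (1 + a/(4*(k:ℂ)))) by push_cast; ring,
      Complex.exp_nat_mul, Complex.exp_neg, Complex.exp_log (hne k hk)]
  have hS0 : ∑ k ∈ Finset.Icc 1 m, a / (4*(k:ℂ)) = a/4 * ((Hr:ℝ):ℂ) := by
    rw [← hHsum, Finset.mul_sum]
    refine Finset.sum_congr rfl fun k hk => ?_
    rw [← div_div, div_eq_mul_inv (a/4)]
  have hNn : (0:ℝ) ≤ ‖a‖ := norm_nonneg a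
  have hlogsum : ‖S - a/4 * ((Hr:ℝ):ℂ)‖ ≤ ‖a‖^2 / 8 := by
    rw [← hS0, hS, ← Finset.sum_sub_distrib]
    calc ‖∑ k ∈ Finset.Icc 1 m, (Complex.log (1 + a/(4*(k:ℂ))) - a/(4*(k:ℂ)))‖
        ≤ ∑ k ∈ Finset.Icc 1 m, ‖Complex.log (1 + a/(4*(k:ℂ))) - a/(4*(k:ℂ))‖ :=
          norm_sum_le _ _
      _ ≤ ∑ k ∈ Finset.Icc 1 m, ‖a‖^2/16 * ((k:ℝ)^2)⁻¹ := by
          refine Finset.sum_le_sum fun k hk => ?_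
          exact (auxLog _ (hwnorm k hk).1).trans (hwnorm k hk).2
      _ = ‖a‖^2/16 * ∑ k ∈ Finset.Icc 1 m, ((k:ℝ)^2)⁻¹ := by rw [Finset.mul_sum]
      _ ≤ ‖a‖^2/16 * 2 := by
          have := auxSq m hm1
          nlinarith [sq_nonneg ‖a‖]
      _ = ‖a‖^2/8 := by ring
  set z : ℂ := (-2) * S with hzdef
  clear_value z
  have hz1 : ‖z + a/2 * ((Hr:ℝ):ℂ)‖ ≤ ‖a‖^2/4 := by
    have he : z + a/2 * ((Hr:ℝ):ℂ) = (-2) * (S - a/4 * ((Hr:ℝ):ℂ)) := by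
      rw [hzdef]; ring
    rw [he, norm_mul, show ‖(-2:ℂ)‖ = 2 by norm_num]
    nlinarith [hlogsum]
  have hHrle : Hr ≤ 2 * L := by have := auxH1 m; rw [hHr]; rw [hLdef]; linarith
  have hHr0 : (0:ℝ) ≤ Hr := by rw [hHr]; exact auxH0 m
  have hnHc : ‖a/2 * ((Hr:ℝ):ℂ)‖ = ‖a‖/2 * Hr := by
    rw [norm_mul, norm_div, Complex.norm_real, Real.norm_of_nonneg hHr0]
    norm_num
  have hNA2 : ‖a‖^2 ≤ A^2/(m:ℝ)^2 := by
    have := pow_le_pow_left₀ hNn haN 2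
    calc ‖a‖^2 ≤ (A/(m:ℝ))^2 := this
      _ = A^2/(m:ℝ)^2 := by ring
  have hzn : ‖z‖ ≤ B * L / m := by
    have h1 : ‖z‖ ≤ ‖a‖/2 * Hr + ‖a‖^2/4 := by
      calc ‖z‖ = ‖(z + a/2*((Hr:ℝ):ℂ)) - a/2*((Hr:ℝ):ℂ)‖ := by ring_nf
        _ ≤ ‖z + a/2*((Hr:ℝ):ℂ)‖ + ‖a/2*((Hr:ℝ):ℂ)‖ := norm_sub_le _ _
        _ ≤ ‖a‖^2/4 + ‖a‖/2 * Hr := by rw [hnHc]; linarith [hz1]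
        _ = ‖a‖/2 * Hr + ‖a‖^2/4 := by ring
    have key1 : ‖a‖/2 * Hr ≤ A * L / m := by
      have h2 : ‖a‖/2 * Hr ≤ (A/(m:ℝ))/2 * (2*L) := by
        apply mul_le_mul (by linarith) hHrle hHr0 (by positivity)
      calc ‖a‖/2 * Hr ≤ (A/(m:ℝ))/2 * (2*L) := h2
        _ = A * L / m := by ring
    have key2 : ‖a‖^2/4 ≤ A^2/4 * (L/m) := by
      have h3 : (1:ℝ)/(m:ℝ)^2 ≤ L/m := by
        rw [div_le_div_iff₀ (by positivity) hn0]
        nlinarith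
      calc ‖a‖^2/4 ≤ (A^2/(m:ℝ)^2)/4 := by linarith
        _ = A^2/4 * ((1:ℝ)/(m:ℝ)^2) := by ring
        _ ≤ A^2/4 * (L/m) := by nlinarith [sq_nonneg A]
    calc ‖z‖ ≤ ‖a‖/2 * Hr + ‖a‖^2/4 := h1
      _ ≤ A * L / m + A^2/4 * (L/m) := by linarith
      _ = B * L / m := by rw [hB]; ring
  have hzle1 : ‖z‖ ≤ 1 := hzn.trans hBlog
  have hexp : ‖Complex.exp z - 1 - z‖ ≤ (B*L/(m:ℝ))^2 := by
    have h := Complex.norm_exp_sub_one_sub_id_le (x := z) hzle1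
    have h2 : ‖z‖^2 ≤ (B*L/(m:ℝ))^2 := pow_le_pow_left₀ (norm_nonneg z) hzn 2
    linarith
  -- decomposition
  set w : ℝ := Hr - L - g with hwdef
  clear_value w
  have hwb : |w| ≤ 1/(m:ℝ) := by
    rw [hwdef, hHr, hLdef, hg]
    exact auxH2 m hm1
  have hmC : ((m:ℂ)) ≠ 0 := Nat.cast_ne_zero.mpr (by omega)
  have hkey : Complex.exp z - (1 - c*((L:ℝ):ℂ)/(8*(m:ℂ)) - ((g:ℝ):ℂ)*c/(8*(m:ℂ)))
      = (Complex.exp z - 1 - z) + (z + a/2*((Hr:ℝ):ℂ))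
        + (-(c * ((w:ℝ):ℂ) / (8*(m:ℂ))) - (a - c/(4*(m:ℂ)))/2 * ((Hr:ℝ):ℂ)) := by
    have hw : ((w:ℝ):ℂ) = ((Hr:ℝ):ℂ) - ((L:ℝ):ℂ) - ((g:ℝ):ℂ) := by
      rw [hwdef]; push_cast; ring
    rw [hw]
    ring
  have hn3 : ‖-(c * ((w:ℝ):ℂ) / (8*(m:ℂ)))‖ ≤ ‖c‖ * (1/(m:ℝ)) / (8*(m:ℝ)) := by
    rw [norm_neg, norm_div, norm_mul, Complex.norm_real]
    have h8 : ‖(8:ℂ)*(m:ℂ)‖ = 8*(m:ℝ) := by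
      rw [norm_mul, Complex.norm_natCast]; norm_num
    rw [h8]
    gcongr
    rw [Real.norm_eq_abs]; exact hwb
  have hn4 : ‖(a - c/(4*(m:ℂ)))/2 * ((Hr:ℝ):ℂ)‖ ≤ (K/(m:ℝ)^2)/2 * (2*L) := by
    rw [norm_mul, norm_div, Complex.norm_real, Real.norm_of_nonneg hHr0,
      show ‖(2:ℂ)‖ = 2 by norm_num]
    apply mul_le_mul _ hHrle hHr0 (by positivity)
    have := hu m hm1
    rw [← ha'] at this
    linarith [this]
  -- final assembly
  rw [hprod, hkey]
  have htri : ‖(Complex.exp z - 1 - z) + (z + a/2*((Hr:ℝ):ℂ))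
        + (-(c * ((w:ℝ):ℂ) / (8*(m:ℂ))) - (a - c/(4*(m:ℂ)))/2 * ((Hr:ℝ):ℂ))‖
      ≤ (B*L/(m:ℝ))^2 + ‖a‖^2/4 + (‖c‖ * (1/(m:ℝ)) / (8*(m:ℝ)) + (K/(m:ℝ)^2)/2 * (2*L)) := by
    calc _ ≤ ‖(Complex.exp z - 1 - z) + (z + a/2*((Hr:ℝ):ℂ))‖
          + ‖-(c * ((w:ℝ):ℂ) / (8*(m:ℂ))) - (a - c/(4*(m:ℂ)))/2 * ((Hr:ℝ):ℂ)‖ :=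
            norm_add_le _ _
      _ ≤ (‖Complex.exp z - 1 - z‖ + ‖z + a/2*((Hr:ℝ):ℂ)‖)
          + (‖-(c * ((w:ℝ):ℂ) / (8*(m:ℂ)))‖ + ‖(a - c/(4*(m:ℂ)))/2 * ((Hr:ℝ):ℂ)‖) :=
            add_le_add (norm_add_le _ _) (norm_sub_le _ _)
      _ ≤ _ := by
        refine add_le_add (add_le_add hexp hz1) (add_le_add hn3 hn4)
  refine htri.trans ?_
  have h2 : (0:ℝ) < (m:ℝ)^2 := by positivity
  have hNA2' : ‖a‖^2 * (m:ℝ)^2 ≤ A^2 := (le_div_iff₀ h2).mp hNA2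
  have hmne : ((m:ℝ)) ≠ 0 := ne_of_gt hn0
  have hL2 : (1:ℝ) ≤ L^2 := by nlinarith
  have e : (B*L/(m:ℝ))^2 + ‖a‖^2/4 + (‖c‖ * (1/(m:ℝ)) / (8*(m:ℝ)) + (K/(m:ℝ)^2)/2 * (2*L))
      = (B^2*L^2 + ‖a‖^2*(m:ℝ)^2/4 + ‖c‖/8 + K*L)/(m:ℝ)^2 := by
    field_simp
    ring
  rw [e]
  rw [show (B^2 + A^2/4 + ‖c‖/8 + K + 1) * L^2 / (m:ℝ)^2
      = ((B^2 + A^2/4 + ‖c‖/8 + K + 1) * L^2) / (m:ℝ)^2 from rfl]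
  gcongr
  have i1 : ‖a‖^2*(m:ℝ)^2/4 ≤ A^2/4*L^2 := by nlinarith [hNA2', hL2, sq_nonneg A]
  have i2 : ‖c‖/8 ≤ ‖c‖/8*L^2 := by nlinarith [hL2, norm_nonneg c]
  have i3 : K*L ≤ K*L^2 := by nlinarith [mul_nonneg hK.le (mul_nonneg (by linarith : (0:ℝ) ≤ L-1) (by linarith : (0:ℝ) ≤ L))]
  nlinarith [i1, i2, i3, sq_nonneg L]
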